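/- Let R > 0 and let u = (x, y) : [0, R] → ℝ² be continuous with y(0) = y(R) = 0. Fix t ∈ [0, R] with y(t) > 0. For a ∈ [0, y(t)], define T_a^← := inf{ s ∈ [0, t] : y(t − s) = a } and T_a^→ := inf{ s ∈ [0, R − t] : y(t + s) = a } (both sets are nonempty by the intermediate value theorem, since y(0) = y(R) = 0 ≤ a ≤ y(t)), and set F(a) := x(t + T_a^→) − x(t − T_a^←). Then F is càdlàg on [0, y(t)]: F is right-continuous at every a ∈ [0, y(t)) (as a function on [0, y(t)]), and F has a (finite) left limit at every a ∈ (0, y(t)]. -/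

import Mathlib

open Filter Set Topology

/-- Helper: properties of the first hitting time of level `a` by a continuous
path `g` on `[0, c]` going from `b > 0` down to `0`. -/
lemma hit_props (c b : ℝ) (g : ℝ → ℝ) (hc : 0 < c)
    (hg : ContinuousOn g (Set.Icc 0 c)) (hg0 : g 0 = b) (hgc : g c = 0) (hb : 0 < b)
    (T : ℝ → ℝ) (hT : ∀ a, T a = sInf {s : ℝ | s ∈ Set.Icc 0 c ∧ g s = a}) :
    (∀ a ∈ Set.Icc 0 b, T a ∈ Set.Icc 0 c) ∧
    (∀ a ∈ Set.Ico 0 b, Tendsto T (nhdsWithin a (Set.Ici a)) (nhds (T a))) ∧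
    (∀ a ∈ Set.Ioc 0 b, ∃ M ∈ Set.Icc 0 c, Tendsto T (nhdsWithin a (Set.Iio a)) (nhds M)) := by
  -- basic properties of the hitting set
  set S : ℝ → Set ℝ := fun a => {s : ℝ | s ∈ Set.Icc 0 c ∧ g s = a} with hS
  have hbdd : ∀ a, BddBelow (S a) := fun a => ⟨0, fun s hs => hs.1.1⟩
  have hclosed : ∀ a, IsClosed (S a) := fun a =>
    hg.preimage_isClosed_of_isClosed isClosed_Icc isClosed_singleton
  have hne : ∀ a ∈ Set.Icc 0 b, (S a).Nonempty := by
    intro a ha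
    have := intermediate_value_Icc' hc.le hg
    rw [hgc, hg0] at this
    obtain ⟨s, hs, hgs⟩ := this ha
    exact ⟨s, hs, hgs⟩
  have hmem : ∀ a ∈ Set.Icc 0 b, T a ∈ S a := by
    intro a ha
    rw [hT]
    exact (hclosed a).csInf_mem (hne a ha) (hbdd a)
  have hmin : ∀ a, ∀ s ∈ S a, T a ≤ s := by
    intro a s hs
    rw [hT]
    exact csInf_le (hbdd a) hs
  -- antitonicity
  have hanti : AntitoneOn T (Set.Icc 0 b) := by
    intro a ha a' ha' haa'
    obtain ⟨hTa, hgTa⟩ := hmem a ha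
    have hsub : Set.Icc (0:ℝ) (T a) ⊆ Set.Icc 0 c := Set.Icc_subset_Icc le_rfl hTa.2
    have := intermediate_value_Icc' hTa.1 (hg.mono hsub)
    rw [hgTa, hg0] at this
    obtain ⟨s, hs, hgs⟩ := this ⟨haa', ha'.2⟩
    calc T a' ≤ s := hmin a' s ⟨hsub hs, hgs⟩
      _ ≤ T a := hs.2
  refine ⟨fun a ha => (hmem a ha).1, ?_, ?_⟩
  · -- right continuity
    intro a ha
    have hab : a < b := ha.2
    have hanti' : AntitoneOn T (Set.Ioo a b) := by
      refine hanti.mono fun s hs => ⟨ha.1.trans hs.1.le, hs.2.le⟩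
    have hbddA : BddAbove (T '' Set.Ioo a b) := by
      refine ⟨c, fun s hs => ?_⟩
      obtain ⟨a', ha', rfl⟩ := hs
      exact (hmem a' ⟨ha.1.trans ha'.1.le, ha'.2.le⟩).1.2
    have hlim := hanti'.tendsto_nhdsWithin_Ioo_right (nonempty_Ioo.2 hab) hbddA
    set L := sSup (T '' Set.Ioo a b) with hL
    -- L = T a
    have hImne : (T '' Set.Ioo a b).Nonempty := (nonempty_Ioo.2 hab).image _
    have hLle : L ≤ T a := by
      refine csSup_le hImne fun s hs => ?_
      obtain ⟨a', ha', rfl⟩ := hs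
      exact hanti ⟨ha.1, hab.le⟩ ⟨ha.1.trans ha'.1.le, ha'.2.le⟩ ha'.1.le
    have hfil : 𝓝[Set.Ioo a b] a = 𝓝[>] a := nhdsWithin_Ioo_eq_nhdsGT hab
    have hlim' : Tendsto T (𝓝[Set.Ioo a b] a) (𝓝 L) := by rw [hfil]; exact hlim
    have hev : ∀ᶠ a' in 𝓝[Set.Ioo a b] a, T a' ∈ Set.Icc 0 c := by
      filter_upwards [self_mem_nhdsWithin] with a' ha'
      exact (hmem a' ⟨ha.1.trans ha'.1.le, ha'.2.le⟩).1
    have hNB : (𝓝[Set.Ioo a b] a).NeBot := by rw [hfil]; exact nhdsGT_neBot a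
    have hLmem : L ∈ Set.Icc 0 c := isClosed_Icc.mem_of_tendsto hlim' hev
    have hgL : g L = a := by
      have h1 : Tendsto (fun a' => g (T a')) (𝓝[Set.Ioo a b] a) (𝓝 (g L)) := by
        refine (hg L hLmem).tendsto.comp ?_
        exact tendsto_nhdsWithin_of_tendsto_nhds_of_eventually_within _ hlim' hev
      have h2 : Tendsto (fun a' => g (T a')) (𝓝[Set.Ioo a b] a) (𝓝 a) := by
        have heq : (fun a' => g (T a')) =ᶠ[𝓝[Set.Ioo a b] a] id := by
          filter_upwards [self_mem_nhdsWithin] with a' ha'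
          exact (hmem a' ⟨ha.1.trans ha'.1.le, ha'.2.le⟩).2
        exact (tendsto_id.mono_left nhdsWithin_le_nhds).congr' heq.symm
      exact tendsto_nhds_unique h1 h2
    have hTle : T a ≤ L := hmin a L ⟨hLmem, hgL⟩
    have hLeq : L = T a := le_antisymm hLle hTle
    rw [hLeq] at hlim
    -- extend from Ioi to Ici
    have hIci : Set.Ici a = Set.Ioi a ∪ {a} := by
      ext s; simp [Set.mem_Ici, Set.mem_Ioi, le_iff_lt_or_eq, or_comm, eq_comm]
    rw [hIci, nhdsWithin_union, tendsto_sup]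
    refine ⟨hlim, ?_⟩
    rw [nhdsWithin_singleton]
    exact tendsto_pure_nhds T a
  · -- left limit
    intro a ha
    have h0a : 0 < a := ha.1
    have hanti' : AntitoneOn T (Set.Ioo 0 a) := by
      refine hanti.mono fun s hs => ⟨hs.1.le, hs.2.le.trans ha.2⟩
    have hbddB : BddBelow (T '' Set.Ioo 0 a) := by
      refine ⟨0, fun s hs => ?_⟩
      obtain ⟨a', ha', rfl⟩ := hs
      exact (hmem a' ⟨ha'.1.le, ha'.2.le.trans ha.2⟩).1.1
    have hlim := hanti'.tendsto_nhdsWithin_Ioo_left (nonempty_Ioo.2 h0a) hbddB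
    set M := sInf (T '' Set.Ioo 0 a) with hM
    have hfil : 𝓝[Set.Ioo 0 a] a = 𝓝[<] a := nhdsWithin_Ioo_eq_nhdsLT h0a
    have hlim' : Tendsto T (𝓝[Set.Ioo 0 a] a) (𝓝 M) := by rw [hfil]; exact hlim
    have hev : ∀ᶠ a' in 𝓝[Set.Ioo 0 a] a, T a' ∈ Set.Icc 0 c := by
      filter_upwards [self_mem_nhdsWithin] with a' ha'
      exact (hmem a' ⟨ha'.1.le, ha'.2.le.trans ha.2⟩).1
    have hNB : (𝓝[Set.Ioo 0 a] a).NeBot := by rw [hfil]; exact nhdsLT_neBot a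
    have hMmem : M ∈ Set.Icc 0 c := isClosed_Icc.mem_of_tendsto hlim' hev
    exact ⟨M, hMmem, hlim⟩

/-- The size `F(a)` of the excursion above level `a` straddling time `t` is a
càdlàg function of the level `a ∈ [0, y t]`. -/
theorem stmt_16 (R : ℝ) (hR : 0 < R) (x y : ℝ → ℝ)
    (hx : ContinuousOn x (Set.Icc 0 R)) (hy : ContinuousOn y (Set.Icc 0 R))
    (hy0 : y 0 = 0) (hyR : y R = 0)
    (t : ℝ) (ht : t ∈ Set.Icc 0 R) (hyt : 0 < y t)
    (Tl Tr : ℝ → ℝ)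
    (hTl : ∀ a, Tl a = sInf {s : ℝ | s ∈ Set.Icc 0 t ∧ y (t - s) = a})
    (hTr : ∀ a, Tr a = sInf {s : ℝ | s ∈ Set.Icc 0 (R - t) ∧ y (t + s) = a})
    (F : ℝ → ℝ) (hF : ∀ a, F a = x (t + Tr a) - x (t - Tl a)) :
    (∀ a ∈ Set.Ico 0 (y t), ContinuousWithinAt F (Set.Icc a (y t)) a) ∧
    (∀ a ∈ Set.Ioc 0 (y t), ∃ L : ℝ,
      Tendsto F (nhdsWithin a (Set.Ico 0 a)) (nhds L)) := by
  have ht0 : 0 < t := by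
    rcases lt_or_eq_of_le ht.1 with h | h
    · exact h
    · exfalso; rw [← h, hy0] at hyt; exact lt_irrefl 0 hyt
  have htR : t < R := by
    rcases lt_or_eq_of_le ht.2 with h | h
    · exact h
    · exfalso; rw [h, hyR] at hyt; exact lt_irrefl 0 hyt
  -- right hitting time
  have hgr : ContinuousOn (fun s => y (t + s)) (Set.Icc 0 (R - t)) := by
    refine hy.comp (Continuous.continuousOn (by continuity)) fun s hs => ?_
    constructor <;> [linarith [hs.1, ht.1]; linarith [hs.2]]
  have hgr0 : (fun s => y (t + s)) 0 = y t := by simp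
  have hgrc : (fun s => y (t + s)) (R - t) = 0 := by simp [hyR]
  obtain ⟨hrmem, hrright, hrleft⟩ :=
    hit_props (R - t) (y t) (fun s => y (t + s)) (by linarith) hgr hgr0 hgrc hyt Tr hTr
  -- left hitting time
  have hgl : ContinuousOn (fun s => y (t - s)) (Set.Icc 0 t) := by
    refine hy.comp (Continuous.continuousOn (by continuity)) fun s hs => ?_
    constructor <;> [linarith [hs.2]; linarith [hs.1, ht.2]]
  have hgl0 : (fun s => y (t - s)) 0 = y t := by simp
  have hglc : (fun s => y (t - s)) t = 0 := by simp [hy0]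
  obtain ⟨hlmem, hlright, hlleft⟩ :=
    hit_props t (y t) (fun s => y (t - s)) ht0 hgl hgl0 hglc hyt Tl hTl
  -- mapping into the domain of x
  have hmapr : ∀ a ∈ Set.Icc 0 (y t), t + Tr a ∈ Set.Icc 0 R := by
    intro a ha
    obtain ⟨h1, h2⟩ := hrmem a ha
    constructor <;> [linarith [ht.1]; linarith]
  have hmapl : ∀ a ∈ Set.Icc 0 (y t), t - Tl a ∈ Set.Icc 0 R := by
    intro a ha
    obtain ⟨h1, h2⟩ := hlmem a ha
    constructor <;> [linarith; linarith [ht.2]]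
  have hFfun : F = fun a => x (t + Tr a) - x (t - Tl a) := funext hF
  constructor
  · intro a ha
    have hsub : Set.Icc a (y t) ⊆ Set.Ici a := fun s hs => hs.1
    have hsub' : Set.Icc a (y t) ⊆ Set.Icc 0 (y t) := Set.Icc_subset_Icc ha.1 le_rfl
    have hamem : a ∈ Set.Icc 0 (y t) := ⟨ha.1, ha.2.le⟩
    have cr : ContinuousWithinAt Tr (Set.Icc a (y t)) a :=
      ((hrright a ha).mono_left (nhdsWithin_mono a hsub))
    have cl : ContinuousWithinAt Tl (Set.Icc a (y t)) a :=
      ((hlright a ha).mono_left (nhdsWithin_mono a hsub))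
    rw [hFfun]
    have c1 : ContinuousWithinAt (fun a' => x (t + Tr a')) (Set.Icc a (y t)) a := by
      refine ContinuousWithinAt.comp (hx _ (hmapr a hamem)) ?_ fun a' ha' => hmapr a' (hsub' ha')
      exact continuousWithinAt_const.add cr
    have c2 : ContinuousWithinAt (fun a' => x (t - Tl a')) (Set.Icc a (y t)) a := by
      refine ContinuousWithinAt.comp (hx _ (hmapl a hamem)) ?_ fun a' ha' => hmapl a' (hsub' ha')
      exact continuousWithinAt_const.sub cl
    exact c1.sub c2
  · intro a ha
    obtain ⟨Mr, hMr, hlimr⟩ := hrleft a ha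
    obtain ⟨Ml, hMl, hliml⟩ := hlleft a ha
    have hfil : 𝓝[Set.Ico 0 a] a = 𝓝[<] a := nhdsWithin_Ico_eq_nhdsLT ha.1
    have hmemr : t + Mr ∈ Set.Icc 0 R := by
      obtain ⟨h1, h2⟩ := hMr; constructor <;> [linarith [ht.1]; linarith]
    have hmeml : t - Ml ∈ Set.Icc 0 R := by
      obtain ⟨h1, h2⟩ := hMl; constructor <;> [linarith; linarith [ht.2]]
    have hevmem : ∀ᶠ a' in 𝓝[Set.Ico 0 a] a, a' ∈ Set.Icc 0 (y t) := by
      filter_upwards [self_mem_nhdsWithin] with a' ha'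
      exact ⟨ha'.1, ha'.2.le.trans ha.2⟩
    refine ⟨x (t + Mr) - x (t - Ml), ?_⟩
    rw [hFfun]
    have t1 : Tendsto (fun a' => x (t + Tr a')) (𝓝[Set.Ico 0 a] a) (𝓝 (x (t + Mr))) := by
      refine (hx _ hmemr).tendsto.comp ?_
      refine tendsto_nhdsWithin_of_tendsto_nhds_of_eventually_within _ ?_ ?_
      · have : Tendsto Tr (𝓝[Set.Ico 0 a] a) (𝓝 Mr) := by rw [hfil]; exact hlimr
        exact tendsto_const_nhds.add this
      · filter_upwards [hevmem] with a' ha'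
        exact hmapr a' ha'
    have t2 : Tendsto (fun a' => x (t - Tl a')) (𝓝[Set.Ico 0 a] a) (𝓝 (x (t - Ml))) := by
      refine (hx _ hmeml).tendsto.comp ?_
      refine tendsto_nhdsWithin_of_tendsto_nhds_of_eventually_within _ ?_ ?_
      · have : Tendsto Tl (𝓝[Set.Ico 0 a] a) (𝓝 Ml) := by rw [hfil]; exact hliml
        exact tendsto_const_nhds.sub this
      · filter_upwards [hevmem] with a' ha'
        exact hmapl a' ha'
    exact t1.sub t2
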